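/- Let P(z) = ∏_{j=1}^N (z − ρ_j e^{2πiθ_j}) be a monic polynomial of degree N with ρ_j > 0 for all j (so P(0) ≠ 0), with constant term a₀ = P(0), and let Q(z) = ∏_{j=1}^N (z − e^{2πiθ_j}). Then |P(z)|/√|a₀| ≥ |Q(z)| for every z with |z| = 1, and consequently h(P) ≥ h(Q) = ∫₀¹ log⁺|Q(e^{2πiθ})| dθ. -/

import Mathlib

open MeasureTheory

/-- `e t = e^{2πit}`. -/
noncomputable def e (t : ℝ) : ℂ := Complex.exp (2 * Real.pi * Complex.I * t)

lemma abs_e (t : ℝ) : ‖e t‖ = 1 := by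
  rw [e, Complex.norm_exp]
  have : (2 * (Real.pi:ℂ) * Complex.I * t).re = 0 := by simp
  rw [this, Real.exp_zero]

lemma continuous_e : Continuous e := by
  unfold e; fun_prop

lemma logplus_eq (y : ℝ) (h : 0 ≤ y) : max (Real.log y) 0 = Real.log (max y 1) := by
  rcases le_total y 1 with h1 | h1
  · rw [max_eq_right h1, Real.log_one, max_eq_right]
    exact Real.log_nonpos h h1
  · rw [max_eq_left h1, max_eq_left (Real.log_nonneg h1)]

lemma logplus_mono {a b : ℝ} (ha : 0 ≤ a) (hab : a ≤ b) :
    max (Real.log a) 0 ≤ max (Real.log b) 0 := by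
  rw [logplus_eq a ha, logplus_eq b (ha.trans hab)]
  exact Real.log_le_log (lt_of_lt_of_le one_pos (le_max_right _ _))
    (max_le_max hab le_rfl)

lemma cont_logplus {f : ℝ → ℝ} (hf : Continuous f) (h0 : ∀ x, 0 ≤ f x) :
    Continuous fun x => max (Real.log (f x)) 0 := by
  have : (fun x => max (Real.log (f x)) 0) = fun x => Real.log (max (f x) 1) := by
    funext x; exact logplus_eq _ (h0 x)
  rw [this]
  apply Real.continuousOn_log.comp_continuous (hf.max continuous_const)
  intro x
  simp only [Set.mem_compl_iff, Set.mem_singleton_iff]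
  have : (1:ℝ) ≤ max (f x) 1 := le_max_right _ _
  positivity

/-- Single-factor inequality. -/
lemma factor_ineq (z w : ℂ) (hz : ‖z‖ = 1) (hw : ‖w‖ = 1)
    {r : ℝ} (hr : 0 < r) :
    Real.sqrt r * ‖z - w‖ ≤ ‖z - (r:ℂ) * w‖ := by
  have hz2 : z.re * z.re + z.im * z.im = 1 := by
    have h := Complex.sq_norm z
    rw [hz] at h
    simpa [Complex.normSq_apply] using h.symm
  have hw2 : w.re * w.re + w.im * w.im = 1 := by
    have h := Complex.sq_norm w
    rw [hw] at h
    simpa [Complex.normSq_apply] using h.symm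
  have h1 : r * ‖z - w‖ ^ 2 ≤ ‖z - (r:ℂ) * w‖ ^ 2 := by
    rw [Complex.sq_norm, Complex.sq_norm]
    simp only [Complex.normSq_apply, Complex.sub_re, Complex.sub_im, Complex.mul_re,
      Complex.mul_im, Complex.ofReal_re, Complex.ofReal_im]
    nlinarith [sq_nonneg (1 - r)]
  have hs : Real.sqrt r * ‖z - w‖ ≥ 0 := by positivity
  nlinarith [Real.sq_sqrt hr.le, norm_nonneg (z - (r:ℂ) * w),
    Real.sqrt_nonneg r, norm_nonneg (z - w)]

/-- Schur's observation: moving the roots of `P` radially onto the unit circle decreases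
the normalized modulus on the unit circle, hence decreases the height `h`. -/
theorem stmt17 (N : ℕ) (ρ : Fin N → ℝ) (hρ : ∀ j, 0 < ρ j) (θ : Fin N → ℝ)
    (P Q : ℂ → ℂ)
    (hPdef : P = fun z => ∏ j, (z - (ρ j : ℂ) * e (θ j)))
    (hQdef : Q = fun z => ∏ j, (z - e (θ j))) :
    (∀ z : ℂ, ‖z‖ = 1 →
      ‖Q z‖ ≤ ‖P z‖ / Real.sqrt (‖P 0‖)) ∧
    (∫ t in (0:ℝ)..1, max (Real.log (‖Q (e t)‖)) 0) ≤
      ∫ t in (0:ℝ)..1,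
        max (Real.log (‖P (e t)‖ / Real.sqrt (‖P 0‖))) 0 := by
  -- value of |P 0|
  have hP0 : ‖P 0‖ = ∏ j, ρ j := by
    rw [hPdef]
    simp only [norm_prod, zero_sub, norm_neg, norm_mul, abs_e, mul_one,
      Complex.norm_real, Real.norm_eq_abs]
    exact Finset.prod_congr rfl fun j _ => abs_of_pos (hρ j)
  have hprodpos : (0:ℝ) < ∏ j, ρ j := Finset.prod_pos fun j _ => hρ j
  have hsqrt : Real.sqrt (‖P 0‖) = ∏ j, Real.sqrt (ρ j) := by
    rw [hP0]
    have h2 : (∏ j, Real.sqrt (ρ j)) ^ 2 = ∏ j, ρ j := by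
      rw [← Finset.prod_pow]
      exact Finset.prod_congr rfl fun j _ => Real.sq_sqrt (hρ j).le
    rw [← h2, Real.sqrt_sq (Finset.prod_nonneg fun j _ => Real.sqrt_nonneg _)]
  have hsqrtpos : 0 < Real.sqrt (‖P 0‖) := by
    rw [hP0]; exact Real.sqrt_pos.mpr hprodpos
  have key : ∀ z : ℂ, ‖z‖ = 1 →
      ‖Q z‖ ≤ ‖P z‖ / Real.sqrt (‖P 0‖) := by
    intro z hz
    rw [le_div_iff₀ hsqrtpos, hsqrt, hPdef, hQdef]
    simp only [norm_prod]
    rw [mul_comm, ← Finset.prod_mul_distrib]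
    exact Finset.prod_le_prod
      (fun j _ => by positivity)
      (fun j _ => factor_ineq z (e (θ j)) hz (abs_e _) (hρ j))
  refine ⟨key, ?_⟩
  have hPc : Continuous P := by rw [hPdef]; fun_prop
  have hQc : Continuous Q := by rw [hQdef]; fun_prop
  apply intervalIntegral.integral_mono_on zero_le_one
  · exact (cont_logplus (continuous_norm.comp (hQc.comp continuous_e))
      fun x => norm_nonneg _).intervalIntegrable 0 1
  · exact (cont_logplus ((continuous_norm.comp (hPc.comp continuous_e)).div_const _)
      fun x => div_nonneg (norm_nonneg _) (Real.sqrt_nonneg _)).intervalIntegrable 0 1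
  · intro t _
    exact logplus_mono (norm_nonneg _) (key (e t) (abs_e t))
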